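/- Let G be bipartite over L and R with weights w and suppose min-weight perfect matching on the completed graph G' (complete bipartite with parts extended to equal size) uses weights w' where w'(e) = w(e) for e ∈ G and w'(e) = W for e ∈ G' \ G, with W strictly greater than the sum of all |w(e)|. If G has a perfect matching, then every minimum-weight perfect matching M' of (G', w') satisfies M' ⊆ G, and M' is a minimum-weight perfect matching of (G, w). -/
import Mathlib


open Finset

def IsGraph {V : Type*} (G : Finset (Finset V)) : Prop := ∀ e ∈ G, e.card = 2

def IsMatching {V : Type*} (M : Finset (Finset V)) : Prop :=
  ∀ e ∈ M, ∀ f ∈ M, e ≠ f → Disjoint e f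

/-- **Correctness of the penalty-based reduction.** If `G ⊆ G'` with `G'` complete
bipartite over equal-sized parts, `w'` agrees with `w` on `G` and assigns penalty
`W > Σ_{e∈G} |w(e)|` on `G' \ G`, and `G` has a perfect matching (of the whole vertex
set of `G'`), then every min-weight perfect matching `M'` of `(G', w')` uses only edges
of `G` and is a min-weight perfect matching of `(G, w)`. -/
theorem penalty_reduction_correct
    {V : Type*} [DecidableEq V]
    (G G' : Finset (Finset V)) (hG' : IsGraph G') (hsub : G ⊆ G')
    (L' R' : Finset V) (hdisj : Disjoint L' R') (hcard : L'.card = R'.card)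
    (hcomplete : ∀ e, e ∈ G' ↔ ∃ u ∈ L', ∃ v ∈ R', e = {u, v})
    (w w' : Finset V → ℝ) (W : ℝ)
    (hw'G : ∀ e ∈ G, w' e = w e)
    (hw'pen : ∀ e ∈ G' \ G, w' e = W)
    (hW : ∑ e ∈ G, |w e| < W)
    (hperf : ∃ M : Finset (Finset V), M ⊆ G ∧ IsMatching M ∧
      ∀ v ∈ G'.biUnion id, ∃ e ∈ M, v ∈ e) :
    ∀ M' : Finset (Finset V),
      (M' ⊆ G' ∧ IsMatching M' ∧ (∀ v ∈ G'.biUnion id, ∃ e ∈ M', v ∈ e) ∧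
        (∀ N : Finset (Finset V), N ⊆ G' → IsMatching N →
          (∀ v ∈ G'.biUnion id, ∃ e ∈ N, v ∈ e) → ∑ e ∈ M', w' e ≤ ∑ e ∈ N, w' e)) →
      (M' ⊆ G ∧
        ∀ N : Finset (Finset V), N ⊆ G → IsMatching N →
          (∀ v ∈ G'.biUnion id, ∃ e ∈ N, v ∈ e) → ∑ e ∈ M', w e ≤ ∑ e ∈ N, w e) := by
  obtain ⟨M, hMG, hMm, hMp⟩ := hperf
  rintro M' ⟨hM'G', hM'm, hM'p, hM'min⟩
  have hle : ∑ e ∈ M', w' e ≤ ∑ e ∈ M, w' e :=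
    hM'min M (hMG.trans hsub) hMm hMp
  have hMw : ∑ e ∈ M, w' e = ∑ e ∈ M, w e :=
    Finset.sum_congr rfl fun e he => hw'G e (hMG he)
  have hWpos : (0:ℝ) < W :=
    lt_of_le_of_lt (Finset.sum_nonneg fun e _ => abs_nonneg _) hW
  have hMsub : M' ⊆ G := by
    by_contra hcon
    have hne : (M' \ G).Nonempty := by
      rw [Finset.sdiff_nonempty]; exact hcon
    set S := M' ∩ G with hS
    have hsplit : ∑ e ∈ M', w' e = ∑ e ∈ S, w e + (M' \ G).card * W := by
      rw [← Finset.sum_inter_add_sum_sdiff M' G w']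
      congr 1
      · exact Finset.sum_congr rfl fun e he => hw'G e (Finset.mem_of_mem_inter_right he)
      · rw [Finset.sum_congr rfl (fun e he => hw'pen e ?_), Finset.sum_const,
          nsmul_eq_mul]
        rcases Finset.mem_sdiff.mp he with ⟨h1, h2⟩
        exact Finset.mem_sdiff.mpr ⟨hM'G' h1, h2⟩
    have hcard1 : (1:ℝ) ≤ (M' \ G).card := by
      have := Finset.card_pos.mpr hne
      exact_mod_cast this
    have hWle : W ≤ (M' \ G).card * W := le_mul_of_one_le_left hWpos.le hcard1
    -- symmetric difference bound
    have hdisjMS : Disjoint (M \ S) (S \ M) := disjoint_sdiff_sdiff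
    have hsubG : (M \ S) ∪ (S \ M) ⊆ G := by
      intro e he
      rcases Finset.mem_union.mp he with h | h
      · exact hMG (Finset.mem_sdiff.mp h).1
      · exact Finset.mem_inter.mp (Finset.mem_sdiff.mp h).1 |>.2
    have habs : ∑ e ∈ M \ S, |w e| + ∑ e ∈ S \ M, |w e| ≤ ∑ e ∈ G, |w e| := by
      rw [← Finset.sum_union hdisjMS]
      exact Finset.sum_le_sum_of_subset_of_nonneg hsubG fun e _ _ => abs_nonneg _
    have h1 : ∑ e ∈ M \ S, w e ≤ ∑ e ∈ M \ S, |w e| :=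
      Finset.sum_le_sum fun e _ => le_abs_self _
    have h2 : -∑ e ∈ S \ M, w e ≤ ∑ e ∈ S \ M, |w e| := by
      rw [← Finset.sum_neg_distrib]
      exact Finset.sum_le_sum fun e _ => neg_le_abs _
    have hMdec : ∑ e ∈ M ∩ S, w e + ∑ e ∈ M \ S, w e = ∑ e ∈ M, w e :=
      Finset.sum_inter_add_sum_sdiff M S w
    have hSdec : ∑ e ∈ S ∩ M, w e + ∑ e ∈ S \ M, w e = ∑ e ∈ S, w e :=
      Finset.sum_inter_add_sum_sdiff S M w
    have hMS : M ∩ S = S ∩ M := Finset.inter_comm M S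
    rw [hMS] at hMdec
    have hdiff : ∑ e ∈ M, w e - ∑ e ∈ S, w e ≤ ∑ e ∈ G, |w e| := by
      linarith
    linarith [hle, hsplit, hMw, hW, hWle]
  refine ⟨hMsub, fun N hNG hNm hNp => ?_⟩
  have hM'w : ∑ e ∈ M', w' e = ∑ e ∈ M', w e :=
    Finset.sum_congr rfl fun e he => hw'G e (hMsub he)
  have hNw : ∑ e ∈ N, w' e = ∑ e ∈ N, w e :=
    Finset.sum_congr rfl fun e he => hw'G e (hNG he)
  have := hM'min N (hNG.trans hsub) hNm hNp
  linarith
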